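/- For every cubic (3-regular) finite graph G and every integer q ≥ 2, the number of proper q-colorings satisfies C_q(G)^{1/|V(G)|} ≥ C_q(K_4)^{1/4}, i.e., C_q(G)^4 ≥ C_q(K_4)^{|V(G)|}, where C_q(K_4) = q(q−1)(q−2)(q−3). -/
import Mathlib


open scoped Classical
open Finset

/-- Number of monochromatic edges of `G` under the coloring `σ`. -/
noncomputable def monoEdges {V : Type} [Fintype V] (G : SimpleGraph V) {q : ℕ}
    (σ : V → Fin q) : ℕ :=
  (G.edgeFinset.filter fun e =>
    Sym2.lift ⟨fun u v => σ u = σ v, fun _ _ => propext eq_comm⟩ e).card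

/-- The `q`-color Potts partition function of `G` at inverse temperature `β`. -/
noncomputable def pottsZ {V : Type} [Fintype V] (G : SimpleGraph V) (q : ℕ) (β : ℝ) : ℝ :=
  ∑ σ : V → Fin q, Real.exp (-β * monoEdges G σ)

/-- The internal energy per particle: expected number of monochromatic
edges per vertex in the Potts model. -/
noncomputable def pottsU {V : Type} [Fintype V] (G : SimpleGraph V) (q : ℕ) (β : ℝ) : ℝ :=
  (Fintype.card V : ℝ)⁻¹ *
    (∑ σ : V → Fin q, (monoEdges G σ : ℝ) * Real.exp (-β * monoEdges G σ)) / pottsZ G q β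

/-- The number of proper `q`-colorings of `G`. -/
noncomputable def properCount {V : Type} [Fintype V] (G : SimpleGraph V) (q : ℕ) : ℕ :=
  (Finset.univ.filter fun σ : V → Fin q => monoEdges G σ = 0).card



section AuxProof

variable {V : Type} [Fintype V]

lemma monoEdges_eq_zero_iff {V : Type} [Fintype V] (G : SimpleGraph V) {q : ℕ}
    (σ : V → Fin q) : monoEdges G σ = 0 ↔ ∀ u w, G.Adj u w → σ u ≠ σ w := by
  unfold monoEdges
  rw [Finset.card_eq_zero, Finset.filter_eq_empty_iff]
  constructor
  · intro h u w huw hc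
    have hm : s(u, w) ∈ G.edgeFinset := by simpa [SimpleGraph.mem_edgeFinset] using huw
    exact h hm (by simpa using hc)
  · intro h e he
    induction e using Sym2.ind with
    | _ u w =>
      simp only [SimpleGraph.mem_edgeFinset, SimpleGraph.mem_edgeSet] at he
      simpa using h u w he

lemma properCount_K4 (q : ℕ) :
    properCount (⊤ : SimpleGraph (Fin 4)) q = q * (q - 1) * (q - 2) * (q - 3) := by
  have h1 : ∀ σ : Fin 4 → Fin q, monoEdges (⊤ : SimpleGraph (Fin 4)) σ = 0 ↔
      Function.Injective σ := by
    intro σ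
    rw [monoEdges_eq_zero_iff]
    constructor
    · intro h u w huw
      by_contra hne
      exact h u w (by simpa [SimpleGraph.top_adj] using hne) huw
    · intro h u w huw hc
      exact huw.ne (h hc)
  have : properCount (⊤ : SimpleGraph (Fin 4)) q
      = Fintype.card {σ : Fin 4 → Fin q // Function.Injective σ} := by
    rw [properCount, Fintype.card_subtype]
    congr 1
    ext σ
    simp [h1]
  rw [this]
  rw [Fintype.card_congr (Equiv.subtypeInjectiveEquivEmbedding (Fin 4) (Fin q)),
    Fintype.card_embedding_eq]
  simp [Nat.descFactorial, Fintype.card_fin]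
  ring

noncomputable def back (G : SimpleGraph V) (π : V ≃ Fin (Fintype.card V)) (v : V) : ℕ :=
  ((G.neighborFinset v).filter fun u => π u < π v).card


noncomputable def partialSet (G : SimpleGraph V) {q : ℕ} (π : V ≃ Fin (Fintype.card V))
    (c₀ : Fin q) (k : ℕ) : Finset (V → Fin q) :=
  Finset.univ.filter fun σ =>
    (∀ u w, G.Adj u w → (π u : ℕ) < k → (π w : ℕ) < k → σ u ≠ σ w) ∧
    ∀ x, ¬((π x : ℕ) < k) → σ x = c₀


lemma partialSet_zero (G : SimpleGraph V) {q : ℕ} (π : V ≃ Fin (Fintype.card V))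
    (c₀ : Fin q) : (partialSet G π c₀ 0).card = 1 := by
  have : partialSet G π c₀ 0 = {fun _ => c₀} := by
    ext σ
    simp only [partialSet, mem_filter, mem_univ, true_and, Nat.not_lt_zero, Nat.lt_irrefl,
      false_implies, implies_true, true_implies, mem_singleton, Finset.mem_singleton]
    constructor
    · intro h
      funext x
      exact h x not_false
    · rintro rfl
      exact fun _ _ => rfl
  rw [this, Finset.card_singleton]


lemma partialSet_top (G : SimpleGraph V) {q : ℕ} (π : V ≃ Fin (Fintype.card V))
    (c₀ : Fin q) : (partialSet G π c₀ (Fintype.card V)).card = properCount G q := by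
  have : partialSet G π c₀ (Fintype.card V)
      = Finset.univ.filter fun σ : V → Fin q => monoEdges G σ = 0 := by
    ext σ
    simp only [partialSet, mem_filter, mem_univ, true_and, monoEdges_eq_zero_iff]
    constructor
    · rintro ⟨h, -⟩
      exact fun u w huw => h u w huw (π u).isLt (π w).isLt
    · intro h
      exact ⟨fun u w huw _ _ => h u w huw, fun x hx => absurd (π x).isLt hx⟩
  rw [this, properCount]

lemma partialSet_step (G : SimpleGraph V) {q : ℕ} (π : V ≃ Fin (Fintype.card V))
    (c₀ : Fin q) (k : ℕ) (hk : k < Fintype.card V) :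
    (q - back G π (π.symm ⟨k, hk⟩)) * (partialSet G π c₀ k).card
      ≤ (partialSet G π c₀ (k + 1)).card := by
  set v : V := π.symm ⟨k, hk⟩ with hv
  have hπv : (π v : ℕ) = k := by rw [hv]; simp
  -- the allowed colors for extending σ at v
  set A : (V → Fin q) → Finset (Fin q) := fun σ =>
    Finset.univ \ ((G.neighborFinset v).filter fun u => π u < π v).image σ with hA
  have hAcard : ∀ σ, q - back G π v ≤ (A σ).card := by
    intro σ
    rw [hA]
    rw [Finset.card_sdiff_of_subset (Finset.subset_univ _), Finset.card_univ, Fintype.card_fin]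
    exact Nat.sub_le_sub_left Finset.card_image_le q
  set T : Finset (V → Fin q) := (partialSet G π c₀ k).biUnion
    (fun σ => (A σ).image fun c => Function.update σ v c) with hT
  -- σ v = c₀ for σ in level k
  have hvc : ∀ σ ∈ partialSet G π c₀ k, σ v = c₀ := by
    intro σ hσ
    rw [partialSet, mem_filter] at hσ
    exact hσ.2.2 v (by omega)
  -- T ⊆ next level
  have hsub : T ⊆ partialSet G π c₀ (k + 1) := by
    intro τ hτ
    rw [hT, Finset.mem_biUnion] at hτ
    obtain ⟨σ, hσ, hτ⟩ := hτ
    rw [Finset.mem_image] at hτ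
    obtain ⟨c, hc, rfl⟩ := hτ
    rw [partialSet, mem_filter] at hσ
    obtain ⟨-, hσp, hσ0⟩ := hσ
    rw [partialSet, mem_filter]
    refine ⟨Finset.mem_univ _, ?_, ?_⟩
    · intro u w huw hu hw
      have hcnot : ∀ w, G.Adj v w → (π w : ℕ) < k → c ≠ σ w := by
        intro w hw hwk hcw
        rw [hA] at hc
        simp only [Finset.mem_sdiff, Finset.mem_univ, true_and, Finset.mem_image,
          Finset.mem_filter, SimpleGraph.mem_neighborFinset] at hc
        exact hc ⟨w, ⟨hw, by rw [Fin.lt_def]; omega⟩, hcw.symm⟩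
      by_cases huv : u = v
      · subst huv
        by_cases hwv : w = v
        · subst hwv; exact absurd huw (G.irrefl)
        · have hwk : (π w : ℕ) < k := by
            have : (π w : ℕ) ≠ k := fun h => hwv (by
              apply π.injective; rw [Fin.ext_iff]; omega)
            omega
          rw [Function.update_self, Function.update_of_ne hwv]
          exact hcnot w huw hwk
      · by_cases hwv : w = v
        · subst hwv
          have huk : (π u : ℕ) < k := by
            have : (π u : ℕ) ≠ k := fun h => huv (by
              apply π.injective; rw [Fin.ext_iff]; omega)
            omega
          rw [Function.update_self, Function.update_of_ne huv]
          exact fun h => hcnot u huw.symm huk h.symm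
        · have huk : (π u : ℕ) < k := by
            have : (π u : ℕ) ≠ k := fun h => huv (by
              apply π.injective; rw [Fin.ext_iff]; omega)
            omega
          have hwk : (π w : ℕ) < k := by
            have : (π w : ℕ) ≠ k := fun h => hwv (by
              apply π.injective; rw [Fin.ext_iff]; omega)
            omega
          rw [Function.update_of_ne huv, Function.update_of_ne hwv]
          exact hσp u w huw huk hwk
    · intro x hx
      have hxv : x ≠ v := fun h => hx (by rw [h, hπv]; omega)
      rw [Function.update_of_ne hxv]
      exact hσ0 x (by omega)
  -- disjointness
  have hdisj : ∀ σ₁ ∈ partialSet G π c₀ k, ∀ σ₂ ∈ partialSet G π c₀ k, σ₁ ≠ σ₂ →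
      Disjoint ((A σ₁).image fun c => Function.update σ₁ v c)
        ((A σ₂).image fun c => Function.update σ₂ v c) := by
    intro σ₁ h₁ σ₂ h₂ hne
    rw [Finset.disjoint_left]
    rintro τ hτ₁ hτ₂
    rw [Finset.mem_image] at hτ₁ hτ₂
    obtain ⟨c₁, -, rfl⟩ := hτ₁
    obtain ⟨c₂, -, he⟩ := hτ₂
    apply hne
    funext x
    by_cases hxv : x = v
    · subst hxv; rw [hvc σ₁ h₁, hvc σ₂ h₂]
    · have := congrFun he x
      rw [Function.update_of_ne hxv, Function.update_of_ne hxv] at this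
      exact this.symm
  calc (q - back G π v) * (partialSet G π c₀ k).card
      = (partialSet G π c₀ k).card • (q - back G π v) := by rw [smul_eq_mul, mul_comm]
    _ ≤ ∑ σ ∈ partialSet G π c₀ k, ((A σ).image fun c => Function.update σ v c).card := by
        apply Finset.card_nsmul_le_sum
        intro σ _
        rw [Finset.card_image_of_injective _ (fun c₁ c₂ h => by
          have := congrFun h v
          rwa [Function.update_self, Function.update_self] at this)]
        exact hAcard σ
    _ = T.card := (Finset.card_biUnion hdisj).symm
    _ ≤ (partialSet G π c₀ (k + 1)).card := Finset.card_le_card hsub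


lemma greedy_bound (G : SimpleGraph V) {q : ℕ} (hq : 0 < q)
    (π : V ≃ Fin (Fintype.card V)) :
    ∏ v : V, (q - back G π v) ≤ properCount G q := by
  set c₀ : Fin q := ⟨0, hq⟩ with hc₀
  have key : ∀ k, k ≤ Fintype.card V →
      ∏ v ∈ Finset.univ.filter (fun v : V => (π v : ℕ) < k), (q - back G π v)
        ≤ (partialSet G π c₀ k).card := by
    intro k
    induction k with
    | zero =>
      intro _
      have : Finset.univ.filter (fun v : V => (π v : ℕ) < 0) = ∅ := by
        ext x; simp
      rw [this, Finset.prod_empty, partialSet_zero]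
    | succ k ih =>
      intro hk1
      have hk : k < Fintype.card V := by omega
      set v : V := π.symm ⟨k, hk⟩ with hv
      have hπv : (π v : ℕ) = k := by rw [hv]; simp
      have hset : Finset.univ.filter (fun x : V => (π x : ℕ) < k + 1)
          = insert v (Finset.univ.filter fun x : V => (π x : ℕ) < k) := by
        ext x
        simp only [mem_filter, mem_univ, true_and, Finset.mem_insert]
        constructor
        · intro hx
          by_cases hxk : (π x : ℕ) = k
          · left
            rw [hv]
            apply_fun π
            rw [Equiv.apply_symm_apply, Fin.ext_iff]
            exact hxk
          · right; omega
        · rintro (rfl | hx)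
          · omega
          · omega
      have hne : v ∉ Finset.univ.filter (fun x : V => (π x : ℕ) < k) := by
        simp [hπv]
      rw [hset, Finset.prod_insert hne]
      calc (q - back G π v) * ∏ x ∈ Finset.univ.filter (fun x : V => (π x : ℕ) < k),
            (q - back G π x)
          ≤ (q - back G π v) * (partialSet G π c₀ k).card :=
            Nat.mul_le_mul_left _ (ih (by omega))
        _ ≤ (partialSet G π c₀ (k + 1)).card := partialSet_step G π c₀ k hk
  have huniv : Finset.univ.filter (fun v : V => (π v : ℕ) < Fintype.card V)
      = Finset.univ := by
    ext x; simp [(π x).isLt]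
  have := key (Fintype.card V) le_rfl
  rwa [huniv, partialSet_top] at this


noncomputable def Efin (G : SimpleGraph V) (v : V) (π : V ≃ Fin (Fintype.card V)) :
    Finset V := (G.neighborFinset v).filter fun u => π u < π v

noncomputable def Lfin (G : SimpleGraph V) (v : V) (π : V ≃ Fin (Fintype.card V)) :
    Finset V := (G.neighborFinset v).filter fun u => π v < π u

lemma back_eq_Efin (G : SimpleGraph V) (v : V) (π : V ≃ Fin (Fintype.card V)) :
    back G π v = (Efin G v π).card := rfl

lemma ne_of_mem_nbr {G : SimpleGraph V} {v u : V} (h : u ∈ G.neighborFinset v) : u ≠ v :=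
  ((SimpleGraph.mem_neighborFinset G v u).mp h).ne'

lemma Efin_card_add_Lfin_card (G : SimpleGraph V) (v : V) (π : V ≃ Fin (Fintype.card V)) :
    (Efin G v π).card + (Lfin G v π).card = G.degree v := by
  have : Lfin G v π = (G.neighborFinset v).filter fun u => ¬ π u < π v := by
    rw [Lfin]
    apply Finset.filter_congr
    intro u hu
    have hne : π u ≠ π v := fun h => (ne_of_mem_nbr hu) (π.injective h)
    constructor
    · exact fun h => asymm h
    · intro h
      exact (lt_or_gt_of_ne hne).resolve_left h
  rw [Efin, this, Finset.card_filter_add_card_filter_not]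
  exact SimpleGraph.card_neighborFinset_eq_degree G v

/-- swap `v` with its minimal later neighbor -/
noncomputable def swapMin (G : SimpleGraph V) (v : V) (π : V ≃ Fin (Fintype.card V)) :
    V ≃ Fin (Fintype.card V) :=
  if h : (Lfin G v π).Nonempty then
    (Equiv.swap v (π.symm (((Lfin G v π).image π).min' (h.image _)))).trans π
  else π

/-- swap `v` with its maximal earlier neighbor -/
noncomputable def swapMax (G : SimpleGraph V) (v : V) (π : V ≃ Fin (Fintype.card V)) :
    V ≃ Fin (Fintype.card V) :=
  if h : (Efin G v π).Nonempty then
    (Equiv.swap v (π.symm (((Efin G v π).image π).max' (h.image _)))).trans π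
  else π

lemma swapMin_spec (G : SimpleGraph V) (v : V) (π : V ≃ Fin (Fintype.card V))
    (h : (Lfin G v π).Nonempty) :
    back G (swapMin G v π) v = back G π v + 1 ∧ swapMax G v (swapMin G v π) = π := by
  set m := ((Lfin G v π).image π).min' (h.image _) with hm
  set u := π.symm m with hu
  have hπu : π u = m := by rw [hu, Equiv.apply_symm_apply]
  have humem : u ∈ Lfin G v π := by
    have := Finset.min'_mem ((Lfin G v π).image π) (h.image _)
    rw [← hm, Finset.mem_image] at this
    obtain ⟨a, ha, hae⟩ := this
    have : a = u := by rw [hu, ← hae, Equiv.symm_apply_apply]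
    rwa [← this]
  have huN : u ∈ G.neighborFinset v := (Finset.mem_filter.mp humem).1
  have huv : u ≠ v := ne_of_mem_nbr huN
  have hvu : π v < π u := (Finset.mem_filter.mp humem).2
  have hmin : ∀ w ∈ Lfin G v π, π u ≤ π w := by
    intro w hw
    rw [hπu, hm]
    exact Finset.min'_le _ _ (Finset.mem_image_of_mem _ hw)
  set π' := swapMin G v π with hπ'
  have hπ'def : π' = (Equiv.swap v u).trans π := by rw [hπ', swapMin, dif_pos h]
  have hπ'v : π' v = π u := by
    rw [hπ'def]; simp [Equiv.trans_apply, Equiv.swap_apply_left]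
  have hπ'u : π' u = π v := by
    rw [hπ'def]; simp [Equiv.trans_apply, Equiv.swap_apply_right]
  have hπ'w : ∀ w, w ≠ v → w ≠ u → π' w = π w := by
    intro w h1 h2
    rw [hπ'def]
    simp [Equiv.trans_apply, Equiv.swap_apply_of_ne_of_ne h1 h2]
  -- E of π' is insert u (E π)
  have hE : Efin G v π' = insert u (Efin G v π) := by
    ext w
    simp only [Efin, Finset.mem_filter, Finset.mem_insert]
    constructor
    · rintro ⟨hwN, hwlt⟩
      by_cases hwu : w = u
      · exact Or.inl hwu
      · right
        refine ⟨hwN, ?_⟩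
        rw [hπ'w w (ne_of_mem_nbr hwN) hwu, hπ'v] at hwlt
        by_contra hcon
        have : π v < π w :=
          (lt_or_gt_of_ne (fun he => (ne_of_mem_nbr hwN) (π.injective he))).resolve_left hcon
        have : w ∈ Lfin G v π := Finset.mem_filter.mpr ⟨hwN, this⟩
        exact absurd hwlt (not_lt.mpr (hmin w this))
    · rintro (rfl | hw)
      · refine ⟨huN, ?_⟩
        rw [hπ'u, hπ'v]
        exact hvu
      · obtain ⟨hwN, hwlt⟩ := hw
        have hwu : w ≠ u := fun he => by
          rw [he] at hwlt; exact absurd (lt_trans hwlt hvu) (lt_irrefl _)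
        refine ⟨hwN, ?_⟩
        rw [hπ'w w (ne_of_mem_nbr hwN) hwu, hπ'v]
        exact lt_trans hwlt hvu
  have hunotE : u ∉ Efin G v π := by
    intro hcon
    exact absurd (lt_trans hvu (Finset.mem_filter.mp hcon).2) (lt_irrefl _)
  constructor
  · rw [back_eq_Efin, back_eq_Efin, hE, Finset.card_insert_of_notMem hunotE]
  · -- recovery
    have hEne : (Efin G v π').Nonempty := by
      rw [hE]; exact Finset.insert_nonempty _ _
    rw [swapMax, dif_pos hEne]
    have himg : (Efin G v π').image π' = insert (π v) ((Efin G v π).image π) := by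
      rw [hE, Finset.image_insert, hπ'u]
      congr 1
      apply Finset.image_congr
      intro w hw
      obtain ⟨hwN, hwlt⟩ := Finset.mem_filter.mp hw
      exact hπ'w w (ne_of_mem_nbr hwN) (fun he => hunotE (he ▸ hw))
    have hmax : ((Efin G v π').image π').max' (hEne.image _) = π v := by
      apply le_antisymm
      · apply Finset.max'_le
        intro y hy
        rw [himg, Finset.mem_insert] at hy
        rcases hy with rfl | hy
        · exact le_refl _
        · rw [Finset.mem_image] at hy
          obtain ⟨w, hw, rfl⟩ := hy
          exact le_of_lt (Finset.mem_filter.mp hw).2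
      · apply Finset.le_max'
        rw [himg]
        exact Finset.mem_insert_self _ _
    rw [hmax]
    have : π'.symm (π v) = u := by
      apply π'.injective
      rw [Equiv.apply_symm_apply, hπ'u]
    rw [this, hπ'def]
    ext x
    simp only [Equiv.trans_apply]
    rw [Equiv.swap_apply_self]


lemma swapMax_spec (G : SimpleGraph V) (v : V) (π : V ≃ Fin (Fintype.card V))
    (h : (Efin G v π).Nonempty) :
    back G (swapMax G v π) v + 1 = back G π v ∧ swapMin G v (swapMax G v π) = π := by
  set m := ((Efin G v π).image π).max' (h.image _) with hm
  set u := π.symm m with hu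
  have hπu : π u = m := by rw [hu, Equiv.apply_symm_apply]
  have humem : u ∈ Efin G v π := by
    have := Finset.max'_mem ((Efin G v π).image π) (h.image _)
    rw [← hm, Finset.mem_image] at this
    obtain ⟨a, ha, hae⟩ := this
    have : a = u := by rw [hu, ← hae, Equiv.symm_apply_apply]
    rwa [← this]
  have huN : u ∈ G.neighborFinset v := (Finset.mem_filter.mp humem).1
  have huv : u ≠ v := ne_of_mem_nbr huN
  have hvu : π u < π v := (Finset.mem_filter.mp humem).2
  have hmax : ∀ w ∈ Efin G v π, π w ≤ π u := by
    intro w hw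
    rw [hπu, hm]
    exact Finset.le_max' _ _ (Finset.mem_image_of_mem _ hw)
  set π' := swapMax G v π with hπ'
  have hπ'def : π' = (Equiv.swap v u).trans π := by rw [hπ', swapMax, dif_pos h]
  have hπ'v : π' v = π u := by
    rw [hπ'def]; simp [Equiv.trans_apply, Equiv.swap_apply_left]
  have hπ'u : π' u = π v := by
    rw [hπ'def]; simp [Equiv.trans_apply, Equiv.swap_apply_right]
  have hπ'w : ∀ w, w ≠ v → w ≠ u → π' w = π w := by
    intro w h1 h2
    rw [hπ'def]
    simp [Equiv.trans_apply, Equiv.swap_apply_of_ne_of_ne h1 h2]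
  -- L of π' is insert u (L π)
  have hL : Lfin G v π' = insert u (Lfin G v π) := by
    ext w
    simp only [Lfin, Finset.mem_filter, Finset.mem_insert]
    constructor
    · rintro ⟨hwN, hwlt⟩
      by_cases hwu : w = u
      · exact Or.inl hwu
      · right
        refine ⟨hwN, ?_⟩
        rw [hπ'w w (ne_of_mem_nbr hwN) hwu, hπ'v] at hwlt
        by_contra hcon
        have : π w < π v :=
          (lt_or_gt_of_ne (fun he => (ne_of_mem_nbr hwN) (π.injective he))).resolve_right hcon
        have : w ∈ Efin G v π := Finset.mem_filter.mpr ⟨hwN, this⟩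
        exact absurd hwlt (not_lt.mpr (hmax w this))
    · rintro (rfl | hw)
      · refine ⟨huN, ?_⟩
        rw [hπ'u, hπ'v]
        exact hvu
      · obtain ⟨hwN, hwlt⟩ := hw
        have hwu : w ≠ u := fun he => by
          rw [he] at hwlt; exact absurd (lt_trans hvu hwlt) (lt_irrefl _)
        refine ⟨hwN, ?_⟩
        rw [hπ'w w (ne_of_mem_nbr hwN) hwu, hπ'v]
        exact lt_trans hvu hwlt
  have hunotL : u ∉ Lfin G v π := by
    intro hcon
    exact absurd (lt_trans hvu (Finset.mem_filter.mp hcon).2) (lt_irrefl _)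
  have hback : back G π' v + 1 = back G π v := by
    have h1 := Efin_card_add_Lfin_card G v π
    have h2 := Efin_card_add_Lfin_card G v π'
    have h3 : (Lfin G v π').card = (Lfin G v π).card + 1 := by
      rw [hL, Finset.card_insert_of_notMem hunotL]
    rw [back_eq_Efin, back_eq_Efin]
    omega
  refine ⟨hback, ?_⟩
  have hLne : (Lfin G v π').Nonempty := by
    rw [hL]; exact Finset.insert_nonempty _ _
  rw [swapMin, dif_pos hLne]
  have himg : (Lfin G v π').image π' = insert (π v) ((Lfin G v π).image π) := by
    rw [hL, Finset.image_insert, hπ'u]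
    congr 1
    apply Finset.image_congr
    intro w hw
    obtain ⟨hwN, hwlt⟩ := Finset.mem_filter.mp hw
    exact hπ'w w (ne_of_mem_nbr hwN) (fun he => hunotL (he ▸ hw))
  have hmin : ((Lfin G v π').image π').min' (hLne.image _) = π v := by
    apply le_antisymm
    · apply Finset.min'_le
      rw [himg]
      exact Finset.mem_insert_self _ _
    · apply Finset.le_min'
      intro y hy
      rw [himg, Finset.mem_insert] at hy
      rcases hy with rfl | hy
      · exact le_refl _
      · rw [Finset.mem_image] at hy
        obtain ⟨w, hw, rfl⟩ := hy
        exact le_of_lt (Finset.mem_filter.mp hw).2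
  rw [hmin]
  have : π'.symm (π v) = u := by
    apply π'.injective
    rw [Equiv.apply_symm_apply, hπ'u]
  rw [this, hπ'def]
  ext x
  simp only [Equiv.trans_apply]
  rw [Equiv.swap_apply_self]

lemma class_card (G : SimpleGraph V) (v : V) (i : ℕ) (hi : i < G.degree v) :
    (Finset.univ.filter fun π : V ≃ Fin (Fintype.card V) => back G π v = i).card
      = (Finset.univ.filter fun π : V ≃ Fin (Fintype.card V) => back G π v = i + 1).card := by
  apply Finset.card_bij' (fun π _ => swapMin G v π) (fun ρ _ => swapMax G v ρ)
  · intro π hπ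
    rw [Finset.mem_filter] at hπ ⊢
    have hL : (Lfin G v π).Nonempty := by
      rw [← Finset.card_pos]
      have h1 := Efin_card_add_Lfin_card G v π
      have h2 := back_eq_Efin G v π
      omega
    exact ⟨Finset.mem_univ _, by rw [(swapMin_spec G v π hL).1, hπ.2]⟩
  · intro ρ hρ
    rw [Finset.mem_filter] at hρ ⊢
    have hE : (Efin G v ρ).Nonempty := by
      rw [← Finset.card_pos]
      have h2 := back_eq_Efin G v ρ
      omega
    refine ⟨Finset.mem_univ _, ?_⟩
    have := (swapMax_spec G v ρ hE).1
    omega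
  · intro π hπ
    rw [Finset.mem_filter] at hπ
    have hL : (Lfin G v π).Nonempty := by
      rw [← Finset.card_pos]
      have h1 := Efin_card_add_Lfin_card G v π
      have h2 := back_eq_Efin G v π
      omega
    exact (swapMin_spec G v π hL).2
  · intro ρ hρ
    rw [Finset.mem_filter] at hρ
    have hE : (Efin G v ρ).Nonempty := by
      rw [← Finset.card_pos]
      have h2 := back_eq_Efin G v ρ
      omega
    exact (swapMax_spec G v ρ hE).2

lemma per_vertex_prod (G : SimpleGraph V) (hG : G.IsRegularOfDegree 3) (v : V) (q : ℕ) :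
    ∃ K : ℕ, (Finset.univ : Finset (V ≃ Fin (Fintype.card V))).card = 4 * K ∧
      ∏ π : V ≃ Fin (Fintype.card V), (q - back G π v)
        = (q * (q - 1) * (q - 2) * (q - 3)) ^ K := by
  set K := (Finset.univ.filter
    fun π : V ≃ Fin (Fintype.card V) => back G π v = 0).card with hK
  have hdeg : G.degree v = 3 := hG v
  have hclass : ∀ i : ℕ, i < 3 →
      (Finset.univ.filter fun π : V ≃ Fin (Fintype.card V) => back G π v = i).card
        = (Finset.univ.filter fun π : V ≃ Fin (Fintype.card V) => back G π v = i + 1).card :=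
    fun i hi => class_card G v i (by omega)
  have hcards : ∀ i : ℕ, i < 4 →
      (Finset.univ.filter fun π : V ≃ Fin (Fintype.card V) => back G π v = i).card = K := by
    intro i hi
    interval_cases i
    · rfl
    · rw [← hclass 0 (by omega)]
    · rw [← hclass 1 (by omega), ← hclass 0 (by omega)]
    · rw [← hclass 2 (by omega), ← hclass 1 (by omega), ← hclass 0 (by omega)]
  have hmaps : ∀ π : V ≃ Fin (Fintype.card V), π ∈ Finset.univ → back G π v ∈ Finset.range 4 := by
    intro π _
    rw [Finset.mem_range, back_eq_Efin]
    have := Efin_card_add_Lfin_card G v π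
    omega
  refine ⟨K, ?_, ?_⟩
  · rw [Finset.card_eq_sum_card_fiberwise hmaps]
    rw [Finset.sum_range_succ, Finset.sum_range_succ, Finset.sum_range_succ,
      Finset.sum_range_one]
    rw [hcards 0 (by omega), hcards 1 (by omega), hcards 2 (by omega), hcards 3 (by omega)]
    ring
  · rw [← Finset.prod_fiberwise_of_maps_to hmaps (fun π => q - back G π v)]
    have hfiber : ∀ i ∈ Finset.range 4,
        ∏ π ∈ Finset.univ.filter (fun π : V ≃ Fin (Fintype.card V) => back G π v = i),
          (q - back G π v) = (q - i) ^ K := by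
      intro i hi
      rw [Finset.mem_range] at hi
      rw [Finset.prod_congr rfl (fun π hπ => by
        rw [(Finset.mem_filter.mp hπ).2]), Finset.prod_const, hcards i hi]
    rw [Finset.prod_congr rfl hfiber]
    rw [Finset.prod_range_succ, Finset.prod_range_succ, Finset.prod_range_succ,
      Finset.prod_range_one]
    rw [← mul_pow, ← mul_pow, ← mul_pow]
    norm_num

end AuxProof

theorem colorings_cubic_ge_K4 {V : Type} [Fintype V] (G : SimpleGraph V)
    (hG : G.IsRegularOfDegree 3) (q : ℕ) (hq : 2 ≤ q) :
    properCount (⊤ : SimpleGraph (Fin 4)) q ^ (Fintype.card V) ≤ properCount G q ^ 4 := by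
  classical
  rw [properCount_K4]
  set n := Fintype.card V with hn
  set P := q * (q - 1) * (q - 2) * (q - 3) with hP
  set C := properCount G q with hC
  haveI : Nonempty (V ≃ Fin n) := ⟨Fintype.equivFin V⟩
  set N := (Finset.univ : Finset (V ≃ Fin n)).card with hNdef
  have hq0 : 0 < q := by omega
  have h1 : ∏ π : V ≃ Fin n, ∏ v : V, (q - back G π v) ≤ C ^ N := by
    calc ∏ π : V ≃ Fin n, ∏ v : V, (q - back G π v)
        ≤ ∏ _π : V ≃ Fin n, C := Finset.prod_le_prod' (fun π _ => greedy_bound G hq0 π)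
      _ = C ^ N := Finset.prod_const C
  choose K hK4 hKprod using fun v => per_vertex_prod G hG v q
  have h2 : ∏ π : V ≃ Fin n, ∏ v : V, (q - back G π v) = P ^ (∑ v : V, K v) := by
    rw [Finset.prod_comm]
    rw [Finset.prod_congr rfl (fun v _ => hKprod v)]
    rw [Finset.prod_pow_eq_pow_sum]
  have hsum : 4 * (∑ v : V, K v) = n * N := by
    have h3 : ∑ _v : V, N = n * N := by
      rw [Finset.sum_const, Finset.card_univ, smul_eq_mul]
    rw [← h3, Finset.mul_sum]
    exact Finset.sum_congr rfl fun v _ => (hK4 v).symm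
  have hN0 : N ≠ 0 := by
    rw [hNdef]
    exact Finset.card_ne_zero_of_mem (Finset.mem_univ (Classical.arbitrary _))
  have key : (P ^ n) ^ N ≤ (C ^ 4) ^ N := by
    calc (P ^ n) ^ N = P ^ (n * N) := by rw [← pow_mul]
      _ = P ^ (4 * ∑ v : V, K v) := by rw [hsum]
      _ = (P ^ (∑ v : V, K v)) ^ 4 := by rw [← pow_mul, mul_comm]
      _ ≤ (C ^ N) ^ 4 := Nat.pow_le_pow_left (h2 ▸ h1) 4
      _ = (C ^ 4) ^ N := by rw [← pow_mul, mul_comm, pow_mul]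
  exact (Nat.pow_le_pow_iff_left hN0).mp key
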